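/- arXiv:math/0106121 — 5 statements merged into one kernel-verified Lean document; each statement's English description precedes it below -/
import Mathlib

section
/- Let z be a finite word and let w be a factor (contiguous subword) of z. If z has period T, if w has minimal period T', and if T + T' ≤ |w|, then T' is a period of z. -/
namespace PalPaper

variable {α : Type*}

/-- The finite word `u i, u (i+1), …, u (i+k-1)` read off the infinite sequence `u`. -/
def factorAt (u : ℕ → α) (i k : ℕ) : List α :=
  (List.range k).map fun j => u (i + j)

/-- `w` occurs as a contiguous block (factor) in the infinite sequence `u`. -/
def IsFactor (u : ℕ → α) (w : List α) : Prop :=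
  ∃ i, w = factorAt u i w.length

/-- A palindrome is a word equal to its reversal. -/
def IsPalindrome (w : List α) : Prop := w.reverse = w

/-- Number of distinct factors of length `k` of `u`. -/
noncomputable def facComplexity (u : ℕ → α) (k : ℕ) : ℕ :=
  Set.ncard {w : List α | w.length = k ∧ IsFactor u w}

/-- Number of distinct palindromic factors of length `k` of `u`. -/
noncomputable def palComplexity (u : ℕ → α) (k : ℕ) : ℕ :=
  Set.ncard {w : List α | w.length = k ∧ IsFactor u w ∧ IsPalindrome w}

/-- `p ≥ 1` is a period of the finite word `w`. -/
def IsPeriodOf (p : ℕ) (w : List α) : Prop :=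
  1 ≤ p ∧ ∀ i (h : i + p < w.length), w[i]'(by omega) = w[i + p]'h

/-- The minimal period of a finite word. -/
noncomputable def minPeriod (w : List α) : ℕ := sInf {p | IsPeriodOf p w}

/-- The prefix of length `m` of the infinite sequence `u`, as a finite word. -/
def seqPrefix (u : ℕ → α) (m : ℕ) : List α := (List.range m).map u

/-- The word `σ(u 0) σ(u 1) ⋯ σ(u (n-1))`. -/
def substPrefix (σ : α → List α) (u : ℕ → α) (n : ℕ) : List α :=
  (List.range n).flatMap fun i => σ (u i)

/-- `v = σ(u)`: every word `σ(u 0) ⋯ σ(u (n-1))` is the corresponding prefix of `v`. -/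
def IsMorphicImage (σ : α → List α) (u v : ℕ → α) : Prop :=
  ∀ n, substPrefix σ u n = seqPrefix v (substPrefix σ u n).length

/-- `u` is a fixed point of the morphism `σ`, i.e. `σ(u) = u`. -/
def IsFixedPointOf (σ : α → List α) (u : ℕ → α) : Prop := IsMorphicImage σ u u

/-- The `k`-th iterate of a morphism, applied to a letter. -/
def morphIter (σ : α → List α) : ℕ → α → List α
  | 0, a => [a]
  | k + 1, a => (σ a).flatMap (morphIter σ k)

/-- A morphism is primitive if some iterate maps every letter to a word
containing every letter. -/
def IsPrimitive (σ : α → List α) : Prop :=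
  ∃ k, 1 ≤ k ∧ ∀ a b : α, b ∈ morphIter σ k a

lemma per_one {p : ℕ} {z : List α} (h : IsPeriodOf p z) {i : ℕ} (hi : i + p < z.length) :
    z[i]? = z[i + p]? := by
  rw [List.getElem?_eq_getElem (by omega), List.getElem?_eq_getElem hi]
  exact congrArg some (h.2 i hi)

lemma per_mul {p : ℕ} {z : List α} (h : IsPeriodOf p z) :
    ∀ k i, i + k * p < z.length → z[i]? = z[i + k * p]?
  | 0, i, _ => by simp
  | k + 1, i, hk => by
    have he : (k + 1) * p = k * p + p := by ring
    have h1 : i + k * p < z.length := by have := h.1; omega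
    rw [he, ← Nat.add_assoc]
    exact (per_mul h k i h1).trans (per_one h (by omega))

lemma per_modeq {p : ℕ} {z : List α} (h : IsPeriodOf p z) {a b : ℕ}
    (hab : a ≡ b [MOD p]) (ha : a < z.length) (hb : b < z.length) :
    z[a]? = z[b]? := by
  rcases Nat.le_total a b with hle | hle
  · obtain ⟨k, hk⟩ := (Nat.modEq_iff_dvd' hle).mp hab
    have hk' : b - a = k * p := by rw [Nat.mul_comm]; exact hk
    have : b = a + k * p := by omega
    subst this
    exact per_mul h k a hb
  · obtain ⟨k, hk⟩ := (Nat.modEq_iff_dvd' hle).mp hab.symm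
    have hk' : a - b = k * p := by rw [Nat.mul_comm]; exact hk
    have : a = b + k * p := by omega
    subst this
    exact (per_mul h k b ha).symm

/-- If `w` is a factor of `z`, `z` has period `T`, `w` has minimal period `T'`,
and `T + T' ≤ |w|`, then `T'` is a period of `z`. -/
theorem stmt1 {α : Type*} (z w : List α) (T T' : ℕ)
    (hwz : w <:+: z) (hT : IsPeriodOf T z) (hT' : T' = minPeriod w)
    (hsum : T + T' ≤ w.length) :
    IsPeriodOf T' z := by
  obtain ⟨s, t, hst⟩ := hwz
  have hlen : z.length = s.length + w.length + t.length := by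
    rw [← hst]; simp only [List.length_append]
  have hT1 : 1 ≤ T := hT.1
  -- indexing: w inside z
  have hidx : ∀ a, a < w.length → z[s.length + a]? = w[a]? := by
    intro a ha
    rw [← hst, List.getElem?_append_left (by simp; omega),
      List.getElem?_append_right (Nat.le_add_right _ _)]
    congr 1
    omega
  -- T is a period of w
  have hTw : IsPeriodOf T w := by
    refine ⟨hT1, fun i hi => ?_⟩
    have h1 : z[s.length + i]? = w[i]? := hidx i (by omega)
    have h2 : z[s.length + (i + T)]? = w[i + T]? := hidx (i + T) hi
    have h3 : z[s.length + i]? = z[s.length + i + T]? :=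
      per_one hT (by omega)
    have : (some (w[i]'(by omega)) : Option α) = some (w[i + T]'hi) := by
      rw [← List.getElem?_eq_getElem, ← List.getElem?_eq_getElem, ← h1, ← h2,
        ← Nat.add_assoc]
      exact h3
    exact Option.some.inj this
  have hTw' : IsPeriodOf T' w := by
    rw [hT']
    exact Nat.sInf_mem (⟨T, hTw⟩ : {p | IsPeriodOf p w}.Nonempty)
  have hT'1 : 1 ≤ T' := hTw'.1
  refine ⟨hT'1, fun i hi => ?_⟩
  -- pick j ≡ i (mod T) with s.length ≤ j < s.length + T
  set sl := s.length with hsl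
  set j := sl + (i + T * sl - sl) % T with hj
  have hTsl : sl ≤ T * sl := Nat.le_mul_of_pos_left sl hT1
  have hjmod : j ≡ i [MOD T] := by
    calc j ≡ sl + (i + T * sl - sl) [MOD T] :=
          Nat.ModEq.add_left sl (Nat.mod_modEq _ T)
      _ = i + T * sl := by omega
      _ ≡ i + 0 [MOD T] := Nat.ModEq.add_left i (Nat.modEq_zero_iff_dvd.mpr ⟨sl, rfl⟩)
      _ = i := by omega
  have hjlt : j < sl + T := by
    have := Nat.mod_lt (i + T * sl - sl) (show 0 < T by omega)
    omega
  have hjge : sl ≤ j := Nat.le_add_right _ _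
  have hjz : j + T' < z.length := by omega
  have e1 : z[i]? = z[j]? := per_modeq hT hjmod.symm (by omega) (by omega)
  have e2 : z[i + T']? = z[j + T']? :=
    per_modeq hT (Nat.ModEq.add_right T' hjmod.symm) (by omega) (by omega)
  have e3 : z[j]? = z[j + T']? := by
    have ha : j - sl + T' < w.length := by omega
    have h1 : z[sl + (j - sl)]? = w[j - sl]? := hidx _ (by omega)
    have h2 : z[sl + (j - sl + T')]? = w[j - sl + T']? := hidx _ ha
    have h3 : (some (w[j - sl]'(by omega)) : Option α) = some (w[j - sl + T']'ha) :=
      congrArg some (hTw'.2 _ ha)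
    rw [← List.getElem?_eq_getElem, ← List.getElem?_eq_getElem, ← h1, ← h2] at h3
    have e4 : sl + (j - sl) = j := by omega
    have e5 : sl + (j - sl + T') = j + T' := by omega
    rwa [e4, e5] at h3
  have := e1.trans (e3.trans e2.symm)
  rw [List.getElem?_eq_getElem (show i < z.length by omega),
    List.getElem?_eq_getElem hi] at this
  exact Option.some.inj this

end PalPaper
end

section
/- Let z be a finite word and let w and w' be two factors of z. Suppose that T, the minimal period of w, T', the minimal period of w', and Θ, the minimal period of z, satisfy Θ + T ≤ |w| and Θ + T' ≤ |w'|. Then T = T'. -/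
namespace PalPaper

variable {α : Type*}

lemma periodSet_nonempty (w : List α) : {p | IsPeriodOf p w}.Nonempty :=
  ⟨w.length + 1, ⟨by omega, fun i h => absurd h (by omega)⟩⟩

lemma minPeriod_isPeriod (w : List α) : IsPeriodOf (minPeriod w) w :=
  Nat.sInf_mem (periodSet_nonempty w)

lemma getElem_of_infix {s w t z : List α} (hst : s ++ w ++ t = z)
    (i : ℕ) (h : i < w.length) (h2 : s.length + i < z.length) :
    z[s.length + i] = w[i] := by
  subst hst
  rw [List.getElem_append_left (by simp; omega), List.getElem_append_right (by omega)]
  congr 1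
  omega

/-- A period of `z` is a period of any factor of `z`. -/
lemma period_of_infix {w z : List α} (hw : w <:+: z) {p : ℕ}
    (hp : IsPeriodOf p z) : IsPeriodOf p w := by
  obtain ⟨s, t, hst⟩ := hw
  have hzlen : z.length = s.length + w.length + t.length := by
    rw [← hst]; simp; omega
  refine ⟨hp.1, fun i h => ?_⟩
  have e1 := getElem_of_infix hst i (by omega) (by omega)
  have e2 := getElem_of_infix hst (i + p) h (by omega)
  have e3 : z[s.length + i]'(by omega) = z[s.length + i + p]'(by omega) :=
    hp.2 (s.length + i) (by omega)
  have e4 : z[s.length + i + p]'(by omega) = z[s.length + (i + p)]'(by omega) := by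
    congr 1; omega
  exact e1.symm.trans ((e3.trans e4).trans e2)

/-- A period `T` of a factor of length ≥ Θ + T propagates to all of `z`,
when Θ is a period of `z`. -/
lemma period_extend {w z : List α} {s t : List α} (hst : s ++ w ++ t = z)
    {T Θ : ℕ} (hΘ : IsPeriodOf Θ z) (hTw : IsPeriodOf T w)
    (hlen : Θ + T ≤ w.length) : IsPeriodOf T z := by
  obtain ⟨hΘ1, hΘp⟩ := hΘ
  obtain ⟨hT1, hTp⟩ := hTw
  have hzlen : z.length = s.length + w.length + t.length := by
    rw [← hst]; simp; omega
  set a := s.length with ha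
  -- window: for a ≤ j, j + T < a + w.length : z[j] = z[j+T]
  have hwin : ∀ j (hj : a ≤ j) (hj2 : j + T < a + w.length),
      z[j]'(by omega) = z[j + T]'(by omega) := by
    intro j hj hj2
    have h1 : j - a + T < w.length := by omega
    have e0 := hTp (j - a) h1
    have e1 := getElem_of_infix hst (j - a) (by omega) (by omega)
    have e2 := getElem_of_infix hst (j - a + T) h1 (by omega)
    have e3 : z[j]'(by omega) = z[a + (j - a)]'(by omega) := by congr 1; omega
    have e4 : z[a + (j - a + T)]'(by omega) = z[j + T]'(by omega) := by congr 1; omega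
    exact e3.trans ((e1.trans (e0.trans e2.symm)).trans e4)
  -- claim1: for i ≥ a
  have claim1 : ∀ d i (hi : a ≤ i) (h2 : i + T < z.length), i ≤ a + d →
      z[i]'(by omega) = z[i + T]'h2 := by
    intro d
    induction d with
    | zero =>
      intro i hi h2 hle
      exact hwin i hi (by omega)
    | succ d ih =>
      intro i hi h2 hle
      by_cases hc : i + T < a + w.length
      · exact hwin i hi hc
      · have hiΘ : a + Θ ≤ i := by omega
        have e1 : z[i - Θ]'(by omega) = z[i]'(by omega) := by
          have := hΘp (i - Θ) (by omega)
          rw [this]; congr 1; omega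
        have e2 : z[i - Θ + T]'(by omega) = z[i + T]'h2 := by
          have := hΘp (i - Θ + T) (by omega)
          rw [this]; congr 1; omega
        rw [← e1, ← e2]
        exact ih (i - Θ) (by omega) (by omega) (by omega)
  -- claim2: all i
  have claim2 : ∀ d i (h2 : i + T < z.length), a ≤ i + d →
      z[i]'(by omega) = z[i + T]'h2 := by
    intro d
    induction d with
    | zero => intro i h2 hle; exact claim1 i i (by omega) h2 (by omega)
    | succ d ih =>
      intro i h2 hle
      by_cases hc : a ≤ i
      · exact claim1 i i hc h2 (by omega)
      · have hib : i + Θ + T < z.length := by omega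
        have e1 : z[i]'(by omega) = z[i + Θ]'(by omega) := hΘp i (by omega)
        have e2 : z[i + T]'h2 = z[i + T + Θ]'(by omega) := hΘp (i + T) (by omega)
        have e3 : z[i + T + Θ]'(by omega) = z[i + Θ + T]'(by omega) := by congr 1; omega
        rw [e1, e2, e3]
        exact ih (i + Θ) hib (by omega)
  exact ⟨hT1, fun i h => claim2 (a + 1) i h (by omega)⟩

/-- If `w, w'` are factors of `z`, with minimal periods `T, T'`, the minimal
period of `z` is `Θ`, and `Θ + T ≤ |w|`, `Θ + T' ≤ |w'|`, then `T = T'`. -/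
theorem stmt2 {α : Type*} (z w w' : List α) (T T' Θ : ℕ)
    (hw : w <:+: z) (hw' : w' <:+: z)
    (hT : T = minPeriod w) (hT' : T' = minPeriod w') (hΘ : Θ = minPeriod z)
    (h1 : Θ + T ≤ w.length) (h2 : Θ + T' ≤ w'.length) :
    T = T' := by
  have hΘz : IsPeriodOf Θ z := hΘ ▸ minPeriod_isPeriod z
  have key : ∀ (v : List α) (hv : v <:+: z) (S : ℕ), S = minPeriod v →
      Θ + S ≤ v.length → S = Θ := by
    intro v hv S hS hlen
    have hSv : IsPeriodOf S v := hS ▸ minPeriod_isPeriod v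
    have hSΘ : S ≤ Θ := hS ▸ Nat.sInf_le (period_of_infix hv hΘz)
    obtain ⟨s, t, hst⟩ := hv
    have hSz : IsPeriodOf S z := period_extend hst hΘz hSv hlen
    have : Θ ≤ S := hΘ ▸ Nat.sInf_le hSz
    omega
  rw [key w hw T hT h1, key w' hw' T' hT' h2]


end PalPaper
end

section
/- Every paperfolding sequence u = (u_n)_{n ≥ 1} has no palindromic factor of length k for any k ≥ 14; that is, pal_u(k) = 0 for all k ≥ 14. -/
namespace PalPaper

variable {α : Type*}

/-- `(u n)_{n ≥ 1}` is a paperfolding sequence: there are unfolding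
instructions `ins m` such that `u (2^m (2j+1)) ≡ j + ins m (mod 2)`. -/
def IsPaperfolding (u : ℕ → ZMod 2) : Prop :=
  ∃ ins : ℕ → ZMod 2, ∀ m j : ℕ, u (2 ^ m * (2 * j + 1)) = (j : ZMod 2) + ins m

/-- A factor of the sequence `(u n)_{n ≥ 1}` (indices start at `1`). -/
def IsFactorFrom1 (u : ℕ → ZMod 2) (w : List (ZMod 2)) : Prop :=
  ∃ i, 1 ≤ i ∧ w = factorAt u i w.length

/-- Palindrome complexity of the sequence `(u n)_{n ≥ 1}`. -/
noncomputable def palComplexityFrom1 (u : ℕ → ZMod 2) (k : ℕ) : ℕ :=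
  Set.ncard {w : List (ZMod 2) | w.length = k ∧ IsFactorFrom1 u w ∧ IsPalindrome w}

/-! ### Auxiliary material -/

def Mdl (a0 a1 a2 a3 b : ZMod 2) (s : ℕ) : ZMod 2 :=
  if s % 2 = 1 then ((s / 2 % 2 : ℕ) : ZMod 2) + a0
  else if s % 4 = 2 then ((s / 4 % 2 : ℕ) : ZMod 2) + a1
  else if s % 8 = 4 then ((s / 8 % 2 : ℕ) : ZMod 2) + a2
  else if s % 16 = 8 then ((s / 16 % 2 : ℕ) : ZMod 2) + a3
  else b

lemma coreM14 : ∀ r : Fin 32, ∀ a0 a1 a2 a3 b : ZMod 2,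
    ∃ t : Fin 14, Mdl a0 a1 a2 a3 b (((r : ℕ) + t) % 32) ≠
      Mdl a0 a1 a2 a3 b (((r : ℕ) + (13 - (t : ℕ))) % 32) := by decide

lemma coreM15 : ∀ r : Fin 32, ∀ a0 a1 a2 a3 b : ZMod 2,
    ∃ t : Fin 15, Mdl a0 a1 a2 a3 b (((r : ℕ) + t) % 32) ≠
      Mdl a0 a1 a2 a3 b (((r : ℕ) + (14 - (t : ℕ))) % 32) := by decide

lemma cast_mod_two (a : ℕ) : ((a : ℕ) : ZMod 2) = ((a % 2 : ℕ) : ZMod 2) :=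
  (ZMod.natCast_mod a 2).symm

/-- Matching lemma: within a window of length 15 starting at `i ≥ 1`, the
paperfolding sequence agrees with the finite model. -/
lemma matching (u : ℕ → ZMod 2) (ins : ℕ → ZMod 2)
    (h : ∀ m j : ℕ, u (2 ^ m * (2 * j + 1)) = (j : ZMod 2) + ins m)
    (i : ℕ) (hi : 1 ≤ i) (t : ℕ) (ht : t < 15) :
    u (i + t) = Mdl (ins 0) (ins 1) (ins 2) (ins 3)
      (u (16 * ((i + 15) / 16))) ((i + t) % 32) := by
  set n := i + t with hn
  have h1 : ∀ e : ℕ, e ≤ 4 → n / 2 ^ e % 2 = n % 32 / 2 ^ e % 2 := by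
    intro e he
    interval_cases e <;> omega
  rcases Nat.lt_or_ge (n % 2) 1 with h2 | h2
  rotate_left
  · -- n odd
    have hmod : n % 2 = 1 := by omega
    have hform : n = 2 ^ 0 * (2 * (n / 2) + 1) := by simp; omega
    have := h 0 (n / 2)
    rw [← hform] at this
    rw [this, Mdl, if_pos (by omega : n % 32 % 2 = 1)]
    rw [cast_mod_two (n / 2)]
    congr 2
    have := h1 1 (by norm_num); simpa using this
  rcases Nat.decEq (n % 4) 2 with h4 | h4
  rotate_left
  · have hform : n = 2 ^ 1 * (2 * (n / 4) + 1) := by omega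
    have := h 1 (n / 4)
    rw [← hform] at this
    rw [this, Mdl, if_neg (by omega : ¬ n % 32 % 2 = 1),
      if_pos (by omega : n % 32 % 4 = 2)]
    rw [cast_mod_two (n / 4)]
    congr 2
    have := h1 2 (by norm_num); simpa using this
  rcases Nat.decEq (n % 8) 4 with h8 | h8
  rotate_left
  · have hform : n = 2 ^ 2 * (2 * (n / 8) + 1) := by omega
    have := h 2 (n / 8)
    rw [← hform] at this
    rw [this, Mdl, if_neg (by omega : ¬ n % 32 % 2 = 1),
      if_neg (by omega : ¬ n % 32 % 4 = 2), if_pos (by omega : n % 32 % 8 = 4)]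
    rw [cast_mod_two (n / 8)]
    congr 2
    have := h1 3 (by norm_num); simpa using this
  rcases Nat.decEq (n % 16) 8 with h16 | h16
  rotate_left
  · have hform : n = 2 ^ 3 * (2 * (n / 16) + 1) := by omega
    have := h 3 (n / 16)
    rw [← hform] at this
    rw [this, Mdl, if_neg (by omega : ¬ n % 32 % 2 = 1),
      if_neg (by omega : ¬ n % 32 % 4 = 2), if_neg (by omega : ¬ n % 32 % 8 = 4),
      if_pos (by omega : n % 32 % 16 = 8)]
    rw [cast_mod_two (n / 16)]
    congr 2
    have := h1 4 (by norm_num); simpa using this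
  · -- n divisible by 16
    have hdvd : n % 16 = 0 := by omega
    have hpos : n = 16 * ((i + 15) / 16) := by omega
    rw [Mdl, if_neg (by omega : ¬ n % 32 % 2 = 1),
      if_neg (by omega : ¬ n % 32 % 4 = 2), if_neg (by omega : ¬ n % 32 % 8 = 4),
      if_neg (by omega : ¬ n % 32 % 16 = 8), ← hpos]

/-- No "pointwise palindrome" of length 14 or 15 at any position `i ≥ 1`. -/
lemma core (u : ℕ → ZMod 2) (hu : IsPaperfolding u) (i : ℕ) (hi : 1 ≤ i)
    (L : ℕ) (hL : L = 14 ∨ L = 15) :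
    ¬ ∀ t, t < L → u (i + t) = u (i + (L - 1 - t)) := by
  obtain ⟨ins, h⟩ := hu
  intro H
  set b := u (16 * ((i + 15) / 16)) with hb
  have key : ∀ t, t < L → Mdl (ins 0) (ins 1) (ins 2) (ins 3) b ((i + t) % 32) =
      Mdl (ins 0) (ins 1) (ins 2) (ins 3) b ((i + (L - 1 - t)) % 32) := by
    intro t ht
    rw [← matching u ins h i hi t (by omega), ← matching u ins h i hi (L - 1 - t) (by omega)]
    exact H t ht
  have hmod : ∀ t : ℕ, (i + t) % 32 = (i % 32 + t) % 32 := by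
    intro t; omega
  rcases hL with rfl | rfl
  · obtain ⟨t, hne⟩ := coreM14 ⟨i % 32, by omega⟩ (ins 0) (ins 1) (ins 2) (ins 3) b
    exact hne (by rw [← hmod, ← hmod]; exact key t (by omega))
  · obtain ⟨t, hne⟩ := coreM15 ⟨i % 32, by omega⟩ (ins 0) (ins 1) (ins 2) (ins 3) b
    exact hne (by rw [← hmod, ← hmod]; exact key t (by omega))

lemma factorAt_length (u : ℕ → α) (i k : ℕ) : (factorAt u i k).length = k := by
  simp [factorAt]

lemma factorAt_getElem (u : ℕ → α) (i k t : ℕ) (ht : t < k) :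
    (factorAt u i k)[t]'(by simp [factorAt_length]; omega) = u (i + t) := by
  simp [factorAt]

/-- A paperfolding sequence has no palindromic factor of length `k ≥ 14`. -/
theorem stmt3 (u : ℕ → ZMod 2) (hu : IsPaperfolding u) :
    ∀ k, 14 ≤ k → palComplexityFrom1 u k = 0 := by
  intro k hk
  have hempty : {w : List (ZMod 2) | w.length = k ∧ IsFactorFrom1 u w ∧ IsPalindrome w} = ∅ := by
    rw [Set.eq_empty_iff_forall_notMem]
    rintro w ⟨hlen, ⟨i, hi, hw⟩, hpal⟩
    rw [hlen] at hw
    subst hw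
    rw [factorAt_length] at hlen
    -- pointwise palindrome condition on the window
    have hpt : ∀ t, t < k → u (i + t) = u (i + (k - 1 - t)) := by
      intro t ht
      have h1 : (factorAt u i k)[t]? = some (u (i + t)) := by
        simp [factorAt, ht]
      have h2 : (factorAt u i k)[k - 1 - t]? = some (u (i + (k - 1 - t))) := by
        have hkt : k - 1 - t < k := by omega
        simp [factorAt, hkt]
      have h3 : (factorAt u i k).reverse[t]? = (factorAt u i k)[k - 1 - t]? := by
        rw [List.getElem?_reverse (by rw [factorAt_length]; omega), factorAt_length]
      rw [hpal] at h3
      rw [h1, h2] at h3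
      exact Option.some.inj h3
    obtain ⟨L, hL, hLle, hLpar⟩ : ∃ L, (L = 14 ∨ L = 15) ∧ L ≤ k ∧ (k - L) % 2 = 0 := by
      rcases Nat.decEq (k % 2) 0 with h | h
      · exact ⟨15, Or.inr rfl, by omega, by omega⟩
      · exact ⟨14, Or.inl rfl, by omega, by omega⟩
    refine core u hu (i + (k - L) / 2) (by omega) L hL ?_
    intro t ht
    have e1 : i + (k - L) / 2 + t = i + ((k - L) / 2 + t) := by omega
    have e2 : i + (k - L) / 2 + (L - 1 - t) = i + (k - 1 - ((k - L) / 2 + t)) := by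
      rcases hL with rfl | rfl <;> omega
    rw [e1, e2]
    exact hpt ((k - L) / 2 + t) (by rcases hL with rfl | rfl <;> omega)
  rw [palComplexityFrom1, hempty, Set.ncard_empty]


end PalPaper
end

section
/- Let T be an even positive integer, let x and y be words of length T/2, and let w be the prefix of length n ≥ 2T of the infinite periodic sequence xyxyxy…, and suppose w is a palindrome whose minimal period is T. Let w^Θ be the prefix of length n of the infinite periodic sequence yxyxyx…. Then w^Θ is a palindrome, its minimal period is T, and w^Θ ≠ w. -/
namespace PalPaper

variable {α : Type*}

/-- The prefix of length `n` of the periodic infinite sequence `v v v ⋯`. -/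
def periodicWord [Inhabited α] (v : List α) (n : ℕ) : List α :=
  (List.range n).map fun i => v.getD (i % v.length) default


lemma pw_length [Inhabited α] (l : List α) (n : ℕ) : (periodicWord l n).length = n := by
  simp [periodicWord]

lemma pw_getElem [Inhabited α] (l : List α) (n i : ℕ) (h : i < (periodicWord l n).length) :
    (periodicWord l n)[i] = l.getD (i % l.length) default := by
  simp [periodicWord]

/-- Twin of a palindrome of even period: if `w` is the palindromic prefix of
length `n ≥ 2T` of `xyxyxy⋯` with minimal period `T` even and `|x| = |y| = T/2`,
then the prefix `w^Θ` of length `n` of `yxyxyx⋯` is a palindrome of the same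
minimal period `T`, and `w^Θ ≠ w`. -/
theorem stmt12 {α : Type*} [Inhabited α] (T n : ℕ) (hT : 0 < T) (hTe : Even T)
    (x y : List α) (hx : x.length = T / 2) (hy : y.length = T / 2)
    (hn : 2 * T ≤ n)
    (w : List α) (hw : w = periodicWord (x ++ y) n)
    (hpal : IsPalindrome w) (hmin : minPeriod w = T) :
    IsPalindrome (periodicWord (y ++ x) n) ∧
    minPeriod (periodicWord (y ++ x) n) = T ∧
    periodicWord (y ++ x) n ≠ w := by
  obtain ⟨t, ht⟩ := hTe
  subst ht
  subst hw
  have hx' : x.length = t := by omega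
  have hy' : y.length = t := by omega
  have ht1 : 1 ≤ t := by omega
  have hlxy : (x ++ y).length = t + t := by simp [hx', hy']
  have hlyx : (y ++ x).length = t + t := by simp [hx', hy']
  set u : ℕ → α := fun i => (x ++ y).getD (i % (t + t)) default with hu
  have hucong : ∀ a b : ℕ, a % (t + t) = b % (t + t) → u a = u b := by
    intro a b h; simp only [hu, h]
  have huT : ∀ a : ℕ, u (a + (t + t)) = u a := fun a =>
    hucong _ _ (Nat.add_mod_right _ _)
  -- entries of the two periodic words
  have hwget : ∀ i, i < n → ∀ (h : i < (periodicWord (x ++ y) n).length),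
      (periodicWord (x ++ y) n)[i] = u i := by
    intro i hi h
    rw [pw_getElem, hlxy]
  have hA : ∀ i : ℕ, (y ++ x).getD (i % (t + t)) default = u (i + t) := by
    intro i
    have hr : i % (t + t) < t + t := Nat.mod_lt _ (by omega)
    have h1 : (i + t) % (t + t) = (i % (t + t) + t) % (t + t) := (Nat.mod_add_mod _ _ _).symm
    rcases lt_or_ge (i % (t + t)) t with hc | hc
    · have h2 : (i + t) % (t + t) = i % (t + t) + t := by
        rw [h1, Nat.mod_eq_of_lt (by omega)]
      simp only [hu, h2]
      rw [List.getD_eq_getElem _ _ (by omega : i % (t+t) < (y ++ x).length),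
          List.getD_eq_getElem _ _ (by omega : i % (t+t) + t < (x ++ y).length),
          List.getElem_append_left (by omega : i % (t+t) < y.length),
          List.getElem_append_right (by omega : x.length ≤ i % (t+t) + t)]
      congr 1
      omega
    · have h2 : (i + t) % (t + t) = i % (t + t) - t := by
        rw [h1]
        have : i % (t + t) + t = (i % (t + t) - t) + (t + t) := by omega
        rw [this, Nat.add_mod_right, Nat.mod_eq_of_lt (by omega)]
      simp only [hu, h2]
      rw [List.getD_eq_getElem _ _ (by omega : i % (t+t) < (y ++ x).length),
          List.getD_eq_getElem _ _ (by omega : i % (t+t) - t < (x ++ y).length),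
          List.getElem_append_right (by omega : y.length ≤ i % (t+t)),
          List.getElem_append_left (by omega : i % (t+t) - t < x.length)]
      congr 1
      omega
  have hvget : ∀ i, i < n → ∀ (h : i < (periodicWord (y ++ x) n).length),
      (periodicWord (y ++ x) n)[i] = u (i + t) := by
    intro i hi h
    rw [pw_getElem, hlyx, hA]
  -- palindromicity of w, in terms of u
  have hupal : ∀ i, i < n → u (n - 1 - i) = u i := by
    intro i hi
    have h1 : i < (periodicWord (x ++ y) n).length := by rw [pw_length]; exact hi
    have h2 := hpal
    unfold IsPalindrome at h2
    have h3 : (periodicWord (x ++ y) n).reverse[i]'(by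
        rw [List.length_reverse]; exact h1) = (periodicWord (x ++ y) n)[i] := by
      simp only [h2]
    rw [List.getElem_reverse] at h3
    simp only [pw_length] at h3
    rw [← hwget _ (by omega) (by rw [pw_length]; omega), ← hwget _ hi h1]
    exact h3
  -- part 1: the twin is a palindrome
  have hpal2 : IsPalindrome (periodicWord (y ++ x) n) := by
    unfold IsPalindrome
    apply List.ext_getElem (by rw [List.length_reverse])
    intro i h1 h2
    rw [List.getElem_reverse]
    simp only [pw_length]
    have hi : i < n := by rw [pw_length] at h2; exact h2
    rw [hvget _ hi h2, hvget _ (by omega) (by rw [pw_length]; omega)]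
    rcases lt_or_ge (i + t) n with hc | hc
    · have e1 : u (n - 1 - i + t) = u (n - 1 - (i + t)) := by
        have : n - 1 - i + t = (n - 1 - (i + t)) + (t + t) := by omega
        rw [this, huT]
      rw [e1, hupal _ (by omega)]
    · have e1 : u (i + t) = u (i - t) := by
        have : i + t = (i - t) + (t + t) := by omega
        rw [this, huT]
      have e2 : n - 1 - (i - t) = n - 1 - i + t := by omega
      rw [e1, ← hupal _ (by omega : i - t < n), e2]
  refine ⟨hpal2, ?_, ?_⟩
  -- part 2: minimal period
  · have hTper : IsPeriodOf (t + t) (periodicWord (y ++ x) n) := by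
      refine ⟨by omega, ?_⟩
      intro i h
      rw [pw_length] at h
      rw [hvget _ (by omega) (by rw [pw_length]; omega),
          hvget _ (by omega) (by rw [pw_length]; omega)]
      have : i + (t + t) + t = (i + t) + (t + t) := by omega
      rw [this, huT]
    have hlb : ∀ p ∈ {p | IsPeriodOf p (periodicWord (y ++ x) n)}, t + t ≤ p := by
      intro p hp
      obtain ⟨hp1, hp2⟩ := hp
      by_contra hcon
      push_neg at hcon
      -- show p is a period of w
      have hpw : IsPeriodOf p (periodicWord (x ++ y) n) := by
        refine ⟨hp1, ?_⟩
        intro i h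
        rw [pw_length] at h
        rw [hwget _ (by omega) (by rw [pw_length]; omega),
            hwget _ (by omega) (by rw [pw_length]; omega)]
        set j := (i + t) % (t + t) with hj
        have hjlt : j < t + t := Nat.mod_lt _ (by omega)
        have hjp : j + p < (periodicWord (y ++ x) n).length := by
          rw [pw_length]; omega
        have h4 := hp2 j hjp
        rw [hvget _ (by omega) (by rw [pw_length]; omega),
            hvget _ (by omega) hjp] at h4
        have e1 : u (j + t) = u i := by
          apply hucong
          rw [hj, Nat.mod_add_mod]
          have : i + t + t = i + (t + t) := by omega
          rw [this, Nat.add_mod_right]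
        have e2 : u (j + p + t) = u (i + p) := by
          apply hucong
          have e3 : j + p + t = j + (p + t) := by omega
          rw [e3, hj, Nat.mod_add_mod]
          have e4 : i + t + (p + t) = (i + p) + (t + t) := by omega
          rw [e4, Nat.add_mod_right]
        rw [← e1, ← e2, h4]
      have : minPeriod (periodicWord (x ++ y) n) ≤ p := Nat.sInf_le hpw
      omega
    apply le_antisymm
    · exact Nat.sInf_le hTper
    · have hne : {p | IsPeriodOf p (periodicWord (y ++ x) n)}.Nonempty := ⟨_, hTper⟩
      exact hlb _ (Nat.sInf_mem hne)
  -- part 3: the twin differs from w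
  · intro heq
    have hth : IsPeriodOf t (periodicWord (x ++ y) n) := by
      refine ⟨ht1, ?_⟩
      intro i h
      rw [pw_length] at h
      have h1 : i < (periodicWord (y ++ x) n).length := by rw [pw_length]; omega
      have h2 := congrArg (fun l => l[i]?) heq
      simp only [List.getElem?_eq_getElem (by rw [pw_length]; omega :
          i < (periodicWord (y ++ x) n).length),
        List.getElem?_eq_getElem (by rw [pw_length]; omega :
          i < (periodicWord (x ++ y) n).length)] at h2
      have h3 : u (i + t) = u i := by
        rw [← hvget _ (by omega) h1, ← hwget _ (by omega) (by rw [pw_length]; omega)]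
        exact Option.some_injective _ h2
      rw [hwget _ (by omega) (by rw [pw_length]; omega),
          hwget _ (by omega) (by rw [pw_length]; omega)]
      exact h3.symm
    have : minPeriod (periodicWord (x ++ y) n) ≤ t := Nat.sInf_le hth
    omega

end PalPaper
end

section
/- Let u be a fixed point of a primitive morphism σ on a finite alphabet A. Suppose there exists a non-empty word x that is a prefix of σ(a) for every a ∈ A, and write σ(a) = x z_a. Define the morphism σ_# by σ_#(a) = z_a x for every a ∈ A. Then σ_# is primitive, some positive power of σ_# admits a fixed point, and any fixed point v of any positive power of σ_# has exactly the same set of factors as u. -/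
namespace PalPaper

variable {α : Type*}

/- ### auxiliary lemmas -/

lemma seqPrefix_length (u : ℕ → α) (n : ℕ) : (seqPrefix u n).length = n := by
  simp [seqPrefix]

lemma seqPrefix_add (u : ℕ → α) (m n : ℕ) :
    seqPrefix u (m + n) = seqPrefix u m ++ factorAt u m n := by
  simp only [seqPrefix, factorAt]
  rw [List.range_add, List.map_append, List.map_map]
  rfl

lemma seqPrefix_one (u : ℕ → α) : seqPrefix u 1 = [u 0] := by
  have : List.range 1 = [0] := by simp [List.range_succ]
  simp only [seqPrefix, this]; rfl

lemma factorAt_one (u : ℕ → α) (m : ℕ) : factorAt u m 1 = [u m] := by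
  have : List.range 1 = [0] := by simp [List.range_succ]
  simp only [factorAt, this, List.map_cons, List.map_nil, Nat.add_zero]

lemma seqPrefix_succ (u : ℕ → α) (n : ℕ) :
    seqPrefix u (n + 1) = seqPrefix u n ++ [u n] := by
  rw [seqPrefix_add, factorAt_one]

lemma seqPrefix_take (u : ℕ → α) {n m : ℕ} (h : n ≤ m) :
    (seqPrefix u m).take n = seqPrefix u n := by
  simp only [seqPrefix]
  rw [← List.map_take, List.take_range, Nat.min_eq_left h]

lemma factorAt_take (u : ℕ → α) (i : ℕ) {j m : ℕ} (h : j ≤ m) :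
    (factorAt u i m).take j = factorAt u i j := by
  simp only [factorAt]
  rw [← List.map_take, List.take_range, Nat.min_eq_left h]

/-- `w` is a prefix of the sequence `u`. -/
def IsPref (u : ℕ → α) (w : List α) : Prop := w = seqPrefix u w.length

lemma isPref_seqPrefix (u : ℕ → α) (n : ℕ) : IsPref u (seqPrefix u n) := by
  rw [IsPref, seqPrefix_length]

lemma IsPref.of_prefix {u : ℕ → α} {w w' : List α} (h : w <+: w') (h' : IsPref u w') :
    IsPref u w := by
  obtain ⟨r, rfl⟩ := h
  have h2 : (w ++ r).take w.length = (seqPrefix u (w ++ r).length).take w.length :=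
    congrArg _ h'
  rwa [List.take_left, seqPrefix_take u (by simp)] at h2

lemma isFactor_iff_infix (u : ℕ → α) (t : List α) :
    IsFactor u t ↔ ∃ n, t <:+: seqPrefix u n := by
  constructor
  · rintro ⟨i, ht⟩
    refine ⟨i + t.length, ⟨seqPrefix u i, [], ?_⟩⟩
    rw [seqPrefix_add, ← ht, List.append_nil]
  · rintro ⟨n, p, q, hpq⟩
    have hlen : p.length + (t.length + q.length) = n := by
      have h0 := congrArg List.length hpq
      simpa [seqPrefix_length] using h0
    have hp : IsPref u p :=
      IsPref.of_prefix ⟨t ++ q, by rw [← List.append_assoc]; exact hpq⟩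
        (isPref_seqPrefix u n)
    have hsplit : seqPrefix u n = seqPrefix u p.length ++ factorAt u p.length (n - p.length) := by
      rw [← seqPrefix_add]; congr 1; omega
    rw [hsplit, ← hp] at hpq
    have htq : t ++ q = factorAt u p.length (n - p.length) := by
      apply List.append_cancel_left (as := p)
      rw [← List.append_assoc]; exact hpq
    refine ⟨p.length, ?_⟩
    have := congrArg (List.take t.length) htq
    rwa [List.take_left, factorAt_take u p.length (by omega)] at this

lemma substPrefix_eq (ρ : α → List α) (u : ℕ → α) (n : ℕ) :
    substPrefix ρ u n = (seqPrefix u n).flatMap ρ := by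
  rw [substPrefix, seqPrefix, List.flatMap_map]

lemma fix_pref {ρ : α → List α} {u : ℕ → α} (hfix : IsFixedPointOf ρ u)
    {w : List α} (hw : IsPref u w) : IsPref u (w.flatMap ρ) := by
  have h := hfix w.length
  rw [substPrefix_eq, ← hw] at h
  exact h

lemma morphIter_zero_eq (ρ : α → List α) : morphIter ρ 0 = fun a => [a] := rfl

lemma morphIter_one (ρ : α → List α) (a : α) : morphIter ρ 1 a = ρ a := by
  show (ρ a).flatMap (morphIter ρ 0) = ρ a
  rw [morphIter_zero_eq]
  simp

lemma morphIter_add (ρ : α → List α) (p q : ℕ) (a : α) :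
    morphIter ρ (p + q) a = (morphIter ρ q a).flatMap (morphIter ρ p) := by
  induction q generalizing a with
  | zero => rw [morphIter_zero_eq]; simp
  | succ q ih =>
    show (ρ a).flatMap (morphIter ρ (p + q)) =
      ((ρ a).flatMap (morphIter ρ q)).flatMap (morphIter ρ p)
    rw [funext ih, List.flatMap_assoc]

lemma flatMap_morphIter_add (ρ : α → List α) (p q : ℕ) (w : List α) :
    w.flatMap (morphIter ρ (p + q)) = (w.flatMap (morphIter ρ q)).flatMap (morphIter ρ p) := by
  rw [funext (morphIter_add ρ p q), List.flatMap_assoc]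

lemma fix_pref_iter {ρ : α → List α} {u : ℕ → α} (hfix : IsFixedPointOf ρ u) (L : ℕ)
    {w : List α} (hw : IsPref u w) : IsPref u (w.flatMap (morphIter ρ L)) := by
  induction L generalizing w with
  | zero => rw [morphIter_zero_eq]; simpa using hw
  | succ L ih =>
    have h : w.flatMap (morphIter ρ (L + 1)) = (w.flatMap ρ).flatMap (morphIter ρ L) := by
      rw [flatMap_morphIter_add ρ L 1, funext (morphIter_one ρ)]
    rw [h]
    exact ih (fix_pref hfix hw)

lemma fixpow_pref {ρ : α → List α} {l : ℕ} {v : ℕ → α}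
    (hv : IsFixedPointOf (morphIter ρ l) v) (m : ℕ)
    {w : List α} (hw : IsPref v w) : IsPref v (w.flatMap (morphIter ρ (l * m))) := by
  induction m generalizing w with
  | zero => rw [Nat.mul_zero, morphIter_zero_eq]; simpa using hw
  | succ m ih =>
    have e : l * (m + 1) = l * m + l := by ring
    rw [e, flatMap_morphIter_add]
    exact ih (fix_pref hv hw)

lemma morphIter_ne_nil {ρ : α → List α} (hρ : ∀ a, ρ a ≠ []) (L : ℕ) (a : α) :
    morphIter ρ L a ≠ [] := by
  induction L generalizing a with
  | zero => simp [morphIter_zero_eq]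
  | succ L ih =>
    show (ρ a).flatMap (morphIter ρ L) ≠ []
    obtain ⟨c, r, hcr⟩ := List.exists_cons_of_ne_nil (hρ a)
    rw [hcr, List.flatMap_cons]
    simp [ih c]

lemma length_le_flatMap {g : α → List α} (hg : ∀ a, g a ≠ []) (w : List α) :
    w.length ≤ (w.flatMap g).length := by
  induction w with
  | nil => simp
  | cons a w ih =>
    rw [List.flatMap_cons, List.length_append, List.length_cons]
    have h1 : 1 ≤ (g a).length := List.length_pos_iff.mpr (hg a)
    omega

lemma two_le_of_mem {l : List α} {b c : α} (hb : b ∈ l) (hc : c ∈ l) (hbc : b ≠ c) :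
    2 ≤ l.length := by
  rcases l with _ | ⟨e, l⟩
  · simp at hb
  · rcases l with _ | ⟨e', l⟩
    · simp only [List.mem_singleton] at hb hc
      exact absurd (hb.trans hc.symm) hbc
    · simp only [List.length_cons]; omega

/- ### conjugacy machinery -/

/-- `yw σ x L = σ^{L-1}(x) ⋯ σ(x) x`, the conjugating word. -/
def yw (σ : α → List α) (x : List α) : ℕ → List α
  | 0 => []
  | L + 1 => x.flatMap (morphIter σ L) ++ yw σ x L

lemma base_conj {σ σs : α → List α} {x : List α} {z : α → List α}
    (hσ : ∀ a, σ a = x ++ z a) (hσs : ∀ a, σs a = z a ++ x) (w : List α) :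
    x ++ w.flatMap σs = w.flatMap σ ++ x := by
  induction w with
  | nil => simp
  | cons a w ih =>
    rw [List.flatMap_cons, List.flatMap_cons, hσs, hσ]
    simp only [List.append_assoc]
    rw [ih]

lemma conj {σ σs : α → List α} {x : List α} {z : α → List α}
    (hσ : ∀ a, σ a = x ++ z a) (hσs : ∀ a, σs a = z a ++ x) (L : ℕ) (w : List α) :
    yw σ x L ++ w.flatMap (morphIter σs L) = w.flatMap (morphIter σ L) ++ yw σ x L := by
  induction L generalizing w with
  | zero =>
    rw [morphIter_zero_eq, morphIter_zero_eq]
    simp [yw]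
  | succ L ih =>
    have h1 : w.flatMap (morphIter σs (L + 1)) = (w.flatMap σs).flatMap (morphIter σs L) := by
      rw [flatMap_morphIter_add σs L 1, funext (morphIter_one σs)]
    have h2 : w.flatMap (morphIter σ (L + 1)) = (w.flatMap σ).flatMap (morphIter σ L) := by
      rw [flatMap_morphIter_add σ L 1, funext (morphIter_one σ)]
    rw [h1, h2]
    show (x.flatMap (morphIter σ L) ++ yw σ x L) ++ (w.flatMap σs).flatMap (morphIter σs L) =
      (w.flatMap σ).flatMap (morphIter σ L) ++ (x.flatMap (morphIter σ L) ++ yw σ x L)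
    calc (x.flatMap (morphIter σ L) ++ yw σ x L) ++ (w.flatMap σs).flatMap (morphIter σs L)
        = x.flatMap (morphIter σ L) ++
            (yw σ x L ++ (w.flatMap σs).flatMap (morphIter σs L)) := by
          simp [List.append_assoc]
      _ = x.flatMap (morphIter σ L) ++
            ((w.flatMap σs).flatMap (morphIter σ L) ++ yw σ x L) := by rw [ih]
      _ = (x ++ w.flatMap σs).flatMap (morphIter σ L) ++ yw σ x L := by
          simp [List.flatMap_append, List.append_assoc]
      _ = (w.flatMap σ ++ x).flatMap (morphIter σ L) ++ yw σ x L := by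
          rw [base_conj hσ hσs]
      _ = (w.flatMap σ).flatMap (morphIter σ L) ++
            (x.flatMap (morphIter σ L) ++ yw σ x L) := by
          simp [List.flatMap_append, List.append_assoc]

lemma conj_single {σ σs : α → List α} {x : List α} {z : α → List α}
    (hσ : ∀ a, σ a = x ++ z a) (hσs : ∀ a, σs a = z a ++ x) (L : ℕ) (a : α) :
    yw σ x L ++ morphIter σs L a = morphIter σ L a ++ yw σ x L := by
  have h := conj hσ hσs L [a]
  simpa using h

lemma length_morphIter_eq {σ σs : α → List α} {x : List α} {z : α → List α}
    (hσ : ∀ a, σ a = x ++ z a) (hσs : ∀ a, σs a = z a ++ x) (L : ℕ) (a : α) :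
    (morphIter σs L a).length = (morphIter σ L a).length := by
  have h := congrArg List.length (conj_single hσ hσs L a)
  simp only [List.length_append] at h
  omega

lemma pref_flatMap_x {σ : α → List α} {u : ℕ → α} {x : List α} {z : α → List α}
    (hfix : IsFixedPointOf σ u) (hσ : ∀ a, σ a = x ++ z a)
    {w : List α} (hw : IsPref u w) : IsPref u (w.flatMap σ ++ x) := by
  have hB : IsPref u ((seqPrefix u (w.length + 1)).flatMap σ) :=
    fix_pref hfix (isPref_seqPrefix u (w.length + 1))
  have hsplit : (seqPrefix u (w.length + 1)).flatMap σ = w.flatMap σ ++ σ (u w.length) := by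
    rw [seqPrefix_succ, ← hw, List.flatMap_append]
    simp
  refine IsPref.of_prefix ?_ hB
  rw [hsplit, hσ (u w.length)]
  exact ⟨z (u w.length), by simp [List.append_assoc]⟩

lemma xi {σ : α → List α} {u : ℕ → α} {x : List α} {z : α → List α}
    (hfix : IsFixedPointOf σ u) (hσ : ∀ a, σ a = x ++ z a) (L : ℕ) :
    ∀ {w : List α}, IsPref u w → IsPref u (w.flatMap (morphIter σ L) ++ yw σ x L) := by
  induction L with
  | zero =>
    intro w hw
    rw [morphIter_zero_eq]
    simpa [yw] using hw
  | succ L ih =>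
    intro w hw
    have h2 : w.flatMap (morphIter σ (L + 1)) = (w.flatMap σ).flatMap (morphIter σ L) := by
      rw [flatMap_morphIter_add σ L 1, funext (morphIter_one σ)]
    have key : IsPref u ((w.flatMap σ ++ x).flatMap (morphIter σ L) ++ yw σ x L) :=
      ih (pref_flatMap_x hfix hσ hw)
    have e : (w.flatMap σ ++ x).flatMap (morphIter σ L) ++ yw σ x L
        = w.flatMap (morphIter σ (L + 1)) ++ yw σ x (L + 1) := by
      rw [h2]
      show _ = (w.flatMap σ).flatMap (morphIter σ L) ++ (x.flatMap (morphIter σ L) ++ yw σ x L)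
      simp [List.flatMap_append, List.append_assoc]
    rwa [e] at key

/- ### growth lemmas -/

lemma mu_growth {σ : α → List α} {k : ℕ} (hσne : ∀ a, σ a ≠ [])
    (hk : ∀ a b : α, b ∈ morphIter σ k a) {b₀ c₀ : α} (hbc : b₀ ≠ c₀) :
    ∀ (N : ℕ) (a : α), N + 1 ≤ (morphIter σ (N * k) a).length := by
  intro N
  induction N with
  | zero => intro a; rw [Nat.zero_mul, morphIter_zero_eq]; simp
  | succ N ih =>
    intro a
    have e : (N + 1) * k = N * k + k := by ring
    rw [e, morphIter_add]
    have h2 : 2 ≤ (morphIter σ k a).length := two_le_of_mem (hk a b₀) (hk a c₀) hbc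
    rcases hl : morphIter σ k a with _ | ⟨c₁, l⟩
    · rw [hl] at h2; simp at h2
    rcases l with _ | ⟨c₂, r⟩
    · rw [hl] at h2; simp at h2
    rw [List.flatMap_cons, List.flatMap_cons, List.length_append, List.length_append]
    have h3 := ih c₁
    have h4 : 1 ≤ (morphIter σ (N * k) c₂).length :=
      List.length_pos_iff.mpr (morphIter_ne_nil hσne (N * k) c₂)
    omega

lemma len_ge {σ : α → List α} {k : ℕ} (hσne : ∀ a, σ a ≠ [])
    (hk : ∀ a b : α, b ∈ morphIter σ k a) {b₀ c₀ : α} (hbc : b₀ ≠ c₀)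
    {N p : ℕ} (h : N * k ≤ p) (a : α) : N + 1 ≤ (morphIter σ p a).length := by
  obtain ⟨j, rfl⟩ := Nat.exists_eq_add_of_le h
  rw [morphIter_add]
  obtain ⟨c, r, hcr⟩ := List.exists_cons_of_ne_nil (morphIter_ne_nil hσne j a)
  rw [hcr, List.flatMap_cons, List.length_append]
  have := mu_growth hσne hk hbc N c
  omega

lemma pad_mem {σ : α → List α} {k : ℕ} (hσne : ∀ a, σ a ≠ [])
    (hk : ∀ a b : α, b ∈ morphIter σ k a) {q : ℕ} (hq : k ≤ q) (c b : α) :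
    b ∈ morphIter σ q c := by
  obtain ⟨j, rfl⟩ := Nat.exists_eq_add_of_le hq
  rw [morphIter_add]
  obtain ⟨c', r, hr⟩ := List.exists_cons_of_ne_nil (morphIter_ne_nil hσne j c)
  rw [hr, List.flatMap_cons]
  exact List.mem_append_left _ (hk c' b)

lemma exists_index {σ : α → List α} {u : ℕ → α} {k : ℕ}
    (hfix : IsFixedPointOf σ u) (hk : ∀ a b : α, b ∈ morphIter σ k a) (c : α) :
    ∃ j, u j = c := by
  have h1 : IsPref u ((seqPrefix u 1).flatMap (morphIter σ k)) :=
    fix_pref_iter hfix k (isPref_seqPrefix u 1)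
  have h2 : c ∈ (seqPrefix u 1).flatMap (morphIter σ k) := by
    rw [seqPrefix_one]
    simpa using hk (u 0) c
  rw [h1] at h2
  simp only [seqPrefix, List.mem_map, List.mem_range] at h2
  obtain ⟨j, _, hj⟩ := h2
  exact ⟨j, hj⟩

/- ### existence of a fixed point of a power -/

lemma seqPrefix_getElem (v : ℕ → α) (L i : ℕ) (h : i < (seqPrefix v L).length) :
    (seqPrefix v L)[i] = v i := by
  simp [seqPrefix]

lemma prefix_flatMap {l₁ l₂ : List α} (h : l₁ <+: l₂) (g : α → List α) :
    l₁.flatMap g <+: l₂.flatMap g := by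
  obtain ⟨r, rfl⟩ := h
  rw [List.flatMap_append]
  exact List.prefix_append _ _

lemma exists_fixed_power {σs : α → List α} [Finite α] (hσsne : ∀ a, σs a ≠ []) (a₀ : α) :
    ∃ l, 1 ≤ l ∧ ∃ v : ℕ → α, IsFixedPointOf (morphIter σs l) v := by
  classical
  set f : α → α := fun a => (σs a).head (hσsne a) with hf
  have headIter : ∀ (j : ℕ) (a : α), ∃ r, morphIter σs j a = f^[j] a :: r := by
    intro j
    induction j with
    | zero => intro a; exact ⟨[], rfl⟩
    | succ j ih =>
      intro a
      have hcons : σs a = f a :: (σs a).tail := (List.cons_head_tail (hσsne a)).symm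
      obtain ⟨r, hr⟩ := ih (f a)
      refine ⟨r ++ ((σs a).tail).flatMap (morphIter σs j), ?_⟩
      show (σs a).flatMap (morphIter σs j) = _
      rw [hcons, List.flatMap_cons, hr, Function.iterate_succ_apply]
      simp
  obtain ⟨m, m', hmm, heq⟩ : ∃ m m', m < m' ∧ f^[m] a₀ = f^[m'] a₀ := by
    obtain ⟨m, m', hne, heq⟩ := Finite.exists_ne_map_eq_of_infinite (fun n => f^[n] a₀)
    rcases lt_or_gt_of_ne hne with h | h
    exacts [⟨m, m', h, heq⟩, ⟨m', m, h, heq.symm⟩]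
  set l := m' - m with hldef
  have hl1 : 1 ≤ l := by omega
  set a : α := f^[m] a₀ with ha
  have hfl : f^[l] a = a := by
    rw [ha, ← Function.iterate_add_apply, hldef, show m' - m + m = m' by omega]
    exact heq.symm
  set τ : α → List α := morphIter σs l with hτ
  have τne : ∀ c, τ c ≠ [] := morphIter_ne_nil hσsne l
  obtain ⟨w, hwa⟩ := headIter l a
  rw [hfl, ← hτ] at hwa
  refine ⟨l, hl1, ?_⟩
  by_cases hw0 : w = []
  · subst hw0
    refine ⟨fun _ => a, ?_⟩
    intro n
    have hrep : ∀ n, (List.replicate n a).flatMap τ = List.replicate n a := by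
      intro n
      induction n with
      | zero => simp
      | succ n ih =>
        rw [List.replicate_succ, List.flatMap_cons, hwa, ih]
        rfl
    have h1 : substPrefix τ (fun _ => a) n = seqPrefix (fun _ => a) n := by
      have h2 : seqPrefix (fun _ => a) n = List.replicate n a := by
        simp [seqPrefix, List.map_const']
      rw [substPrefix_eq, h2, hrep n, ← h2]
    rw [h1, seqPrefix_length]
  · set B : ℕ → List α := fun m => morphIter τ m a with hB
    have hBsucc : ∀ m, B (m + 1) = B m ++ w.flatMap (morphIter τ m) := by
      intro m
      show (τ a).flatMap (morphIter τ m) = _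
      rw [hwa, List.flatMap_cons]
    have hτiterne : ∀ m c, morphIter τ m c ≠ [] := fun m => morphIter_ne_nil τne m
    have hlenB : ∀ m, m < (B m).length := by
      intro m
      induction m with
      | zero =>
        show 0 < (morphIter τ 0 a).length
        rw [morphIter_zero_eq]; simp
      | succ m ih =>
        rw [hBsucc m, List.length_append]
        obtain ⟨c, r, hcr⟩ := List.exists_cons_of_ne_nil hw0
        rw [hcr, List.flatMap_cons, List.length_append]
        have := List.length_pos_iff.mpr (hτiterne m c)
        omega
    have hchain : ∀ {m m' : ℕ}, m ≤ m' → B m <+: B m' := by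
      intro m m' h
      induction m' with
      | zero =>
        rw [Nat.le_zero] at h; subst h; exact List.prefix_refl _
      | succ m' ih =>
        rcases Nat.lt_or_ge m (m' + 1) with h1 | h1
        · rw [hBsucc m']
          exact (ih (by omega)).trans (List.prefix_append _ _)
        · have h2 : m = m' + 1 := by omega
          subst h2; exact List.prefix_refl _
    refine ⟨fun n => (B (n + 1)).getD n a, ?_⟩
    set v : ℕ → α := fun n => (B (n + 1)).getD n a with hv
    have hgetv : ∀ (i M : ℕ) (h : i < (B M).length), (B M)[i] = v i := by
      intro i M h
      have hi1 : i < (B (i + 1)).length := by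
        have := hlenB (i + 1); omega
      have hvd : v i = (B (i + 1))[i] := List.getD_eq_getElem _ a hi1
      rcases le_total M (i + 1) with h1 | h1
      · rw [hvd]; exact (hchain h1).getElem h
      · rw [hvd]; exact ((hchain h1).getElem hi1).symm
    have hBv : ∀ M, IsPref v (B M) := by
      intro M
      rw [IsPref]
      apply List.ext_getElem (by rw [seqPrefix_length])
      intro i h1 h2
      rw [seqPrefix_getElem, hgetv i M h1]
    intro n
    have h1 : seqPrefix v n = (B n).take n := by
      rw [hBv n, seqPrefix_take v (le_of_lt (hlenB n))]
    have h3 : (B n).flatMap τ = B (n + 1) := by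
      show _ = morphIter τ (n + 1) a
      rw [show n + 1 = 1 + n from by omega, morphIter_add, funext (morphIter_one τ)]
    have hpre : substPrefix τ v n <+: B (n + 1) := by
      rw [substPrefix_eq, h1, ← h3]
      exact prefix_flatMap (List.take_prefix n (B n)) τ
    exact IsPref.of_prefix hpre (hBv (n + 1))

lemma IsPref.eq {u : ℕ → α} {w : List α} (h : IsPref u w) :
    w = seqPrefix u w.length := h

theorem stmt15' {α : Type*} [Fintype α] (σ : α → List α) (hprim : IsPrimitive σ)
    (u : ℕ → α) (hfix : IsFixedPointOf σ u)
    (x : List α) (hx : x ≠ []) (z : α → List α) (hσ : ∀ a, σ a = x ++ z a)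
    (σs : α → List α) (hσs : ∀ a, σs a = z a ++ x) :
    IsPrimitive σs ∧
    (∃ l, 1 ≤ l ∧ ∃ v : ℕ → α, IsFixedPointOf (morphIter σs l) v) ∧
    (∀ l, 1 ≤ l → ∀ v : ℕ → α, IsFixedPointOf (morphIter σs l) v →
      ∀ t : List α, IsFactor v t ↔ IsFactor u t) := by
  classical
  obtain ⟨k, hk1, hk⟩ := hprim
  have hσne : ∀ a, σ a ≠ [] := fun a => by rw [hσ a]; simp [hx]
  have hσsne : ∀ a, σs a ≠ [] := fun a => by rw [hσs a]; simp [hx]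
  have hprims : IsPrimitive σs := by
    refine ⟨k, hk1, fun a b => ?_⟩
    have h := congrArg (List.count b) (conj_single hσ hσs k a)
    simp only [List.count_append] at h
    have h1 : 0 < (morphIter σ k a).count b := List.count_pos_iff.mpr (hk a b)
    have h2 : 0 < (morphIter σs k a).count b := by omega
    exact List.count_pos_iff.mp h2
  refine ⟨hprims, exists_fixed_power hσsne (u 0), ?_⟩
  intro l hl v hv t
  by_cases hdeg : ∀ b c : α, b = c
  · have huv : v = u := funext fun n => hdeg _ _
    rw [huv]
  · push_neg at hdeg
    obtain ⟨b₀, c₀, hbc⟩ := hdeg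
    by_cases ht0 : t = []
    · subst ht0
      constructor <;> intro _ <;> exact ⟨0, by simp [factorAt]⟩
    · have htlen : 1 ≤ t.length := List.length_pos_iff.mpr ht0
      constructor
      · -- every factor of v is a factor of u
        intro hF
        obtain ⟨N, htinf⟩ := (isFactor_iff_infix v t).mp hF
        set p := l * (N * k) with hp
        have hpk : N * k ≤ p := by
          calc N * k = 1 * (N * k) := by ring
            _ ≤ l * (N * k) := Nat.mul_le_mul_right _ hl
        set A := morphIter σs p (v 0) with hA
        have hAp : IsPref v A := by
          have h0 := fixpow_pref hv (N * k) (isPref_seqPrefix v 1)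
          rw [seqPrefix_one, ← hp] at h0
          simpa [hA] using h0
        have hlenA : N ≤ A.length := by
          have h1 : N + 1 ≤ (morphIter σ p (v 0)).length := len_ge hσne hk hbc hpk (v 0)
          have h2 := length_morphIter_eq hσ hσs p (v 0)
          rw [hA]
          omega
        have hNA : seqPrefix v N <+: A := by
          have h3 := List.take_prefix N (seqPrefix v A.length)
          rw [seqPrefix_take v hlenA] at h3
          rwa [← hAp.eq] at h3
        have htA : t <:+: A := htinf.trans hNA.isInfix
        obtain ⟨j, hj⟩ := exists_index hfix hk (v 0)
        have hsuf : A <:+: (seqPrefix u (j + 1)).flatMap (morphIter σs p) := by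
          rw [seqPrefix_succ, List.flatMap_append, hj]
          refine ⟨(seqPrefix u j).flatMap (morphIter σs p), [], ?_⟩
          simp [hA]
        have hXi : IsPref u ((seqPrefix u (j + 1)).flatMap (morphIter σ p) ++ yw σ x p) :=
          xi hfix hσ p (isPref_seqPrefix u (j + 1))
        have hinf2 : (seqPrefix u (j + 1)).flatMap (morphIter σs p) <:+:
            (seqPrefix u (j + 1)).flatMap (morphIter σ p) ++ yw σ x p := by
          rw [← conj hσ hσs p (seqPrefix u (j + 1))]
          exact (List.suffix_append _ _).isInfix
        have hfin := (htA.trans hsuf).trans hinf2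
        refine (isFactor_iff_infix u t).mpr
          ⟨((seqPrefix u (j + 1)).flatMap (morphIter σ p) ++ yw σ x p).length, ?_⟩
        rwa [← hXi.eq]
      · -- every factor of u is a factor of v
        intro hF
        obtain ⟨N, htinf⟩ := (isFactor_iff_infix u t).mp hF
        set m₁ := N * k with hm₁
        set A0 := morphIter σ m₁ (u 0) with hA0
        have hA0p : IsPref u A0 := by
          have h0 := fix_pref_iter hfix m₁ (isPref_seqPrefix u 1)
          rw [seqPrefix_one] at h0
          simpa [hA0] using h0
        have hlenA0 : N ≤ A0.length := by
          have h1 : N + 1 ≤ (morphIter σ m₁ (u 0)).length :=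
            len_ge hσne hk hbc (le_refl (N * k)) (u 0)
          rw [hA0]
          omega
        have htA0 : t <:+: A0 := by
          have h3 := List.take_prefix N (seqPrefix u A0.length)
          rw [seqPrefix_take u hlenA0] at h3
          rw [← hA0p.eq] at h3
          exact htinf.trans h3.isInfix
        set L := l * (m₁ + k) with hL
        have hLge : m₁ + k ≤ L := by
          calc m₁ + k = 1 * (m₁ + k) := by ring
            _ ≤ l * (m₁ + k) := Nat.mul_le_mul_right _ hl
        have hall : ∀ c, t <:+: morphIter σ L c := by
          intro c
          have hq' : L = m₁ + (L - m₁) := by omega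
          rw [hq', morphIter_add]
          have hu0 : u 0 ∈ morphIter σ (L - m₁) c :=
            pad_mem hσne hk (by omega) c (u 0)
          obtain ⟨s₁, s₂, hs⟩ := List.append_of_mem hu0
          rw [hs, List.flatMap_append, List.flatMap_cons]
          refine htA0.trans ⟨s₁.flatMap (morphIter σ m₁), s₂.flatMap (morphIter σ m₁), ?_⟩
          simp [hA0, List.append_assoc]
        set Y := yw σ x L with hY
        set r := Y.length + 1 with hr
        set W' := seqPrefix v Y.length with hW'
        have hWsplit : seqPrefix v r = W' ++ [v Y.length] := seqPrefix_succ v Y.length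
        obtain ⟨s₁, s₂, hs⟩ := hall (v Y.length)
        have hMW : (seqPrefix v r).flatMap (morphIter σ L)
            = W'.flatMap (morphIter σ L) ++ (s₁ ++ (t ++ s₂)) := by
          rw [hWsplit, List.flatMap_append]
          congr 1
          simp only [List.flatMap_cons, List.flatMap_nil, List.append_nil, ← hs,
            List.append_assoc]
        have hYle : Y.length ≤ (W'.flatMap (morphIter σ L)).length := by
          have h5 := length_le_flatMap (morphIter_ne_nil hσne L) W'
          rwa [hW', seqPrefix_length] at h5
        have hM : (seqPrefix v r).flatMap (morphIter σs L)
            = ((W'.flatMap (morphIter σ L)).drop Y.length ++ s₁) ++ t ++ (s₂ ++ Y) := by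
          have hcj := conj hσ hσs L (seqPrefix v r)
          rw [← hY] at hcj
          have h6 := congrArg (List.drop Y.length) hcj
          rw [List.drop_left, hMW, List.append_assoc,
            List.drop_append_of_le_length hYle] at h6
          rw [h6]
          simp [List.append_assoc]
        have hMp : IsPref v ((seqPrefix v r).flatMap (morphIter σs L)) := by
          have h7 := fixpow_pref hv (m₁ + k) (isPref_seqPrefix v r)
          rwa [← hL] at h7
        refine (isFactor_iff_infix v t).mpr
          ⟨((seqPrefix v r).flatMap (morphIter σs L)).length, ?_⟩
        rw [← hMp.eq, hM]
        exact ⟨_, _, rfl⟩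


/-- If `u` is a fixed point of a primitive morphism `σ` with `σ a = x ++ z a`
(`x` non-empty) for all `a`, and `σ# a = z a ++ x`, then `σ#` is primitive,
some positive power of `σ#` admits a fixed point, and every fixed point of
every positive power of `σ#` has exactly the same factors as `u`. -/
theorem stmt15 {α : Type*} [Fintype α] (σ : α → List α) (hprim : IsPrimitive σ)
    (u : ℕ → α) (hfix : IsFixedPointOf σ u)
    (x : List α) (hx : x ≠ []) (z : α → List α) (hσ : ∀ a, σ a = x ++ z a)
    (σs : α → List α) (hσs : ∀ a, σs a = z a ++ x) :
    IsPrimitive σs ∧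
    (∃ l, 1 ≤ l ∧ ∃ v : ℕ → α, IsFixedPointOf (morphIter σs l) v) ∧
    (∀ l, 1 ≤ l → ∀ v : ℕ → α, IsFixedPointOf (morphIter σs l) v →
      ∀ t : List α, IsFactor v t ↔ IsFactor u t) :=
  stmt15' σ hprim u hfix x hx z hσ σs hσs

end PalPaper
end
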